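/- The total acquisition number of the cycle C_{4k} equals k for every positive integer k. -/

import Mathlib

/-- A total acquisition move: all the weight of `u` is moved to an adjacent
vertex `v`, provided `v` carries at least as much weight as `u`. -/
def AcqMove {V : Type*} [DecidableEq V] (G : SimpleGraph V) (w w' : V → ℕ) : Prop :=
  ∃ u v, G.Adj u v ∧ 0 < w u ∧ w u ≤ w v ∧
    w' = Function.update (Function.update w v (w v + w u)) u 0

/-- Reachability by a finite sequence of total acquisition moves. -/
def AcqReach {V : Type*} [DecidableEq V] (G : SimpleGraph V) : (V → ℕ) → (V → ℕ) → Prop :=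
  Relation.ReflTransGen (AcqMove G)

/-- No total acquisition move is available from `w`. -/
def AcqMaximal {V : Type*} [DecidableEq V] (G : SimpleGraph V) (w : V → ℕ) : Prop :=
  ∀ w', ¬ AcqMove G w w'

/-- The total acquisition number: minimum number of vertices with positive
weight after a maximal sequence of total acquisition moves starting from the
all-ones weight function. -/
noncomputable def totalAcq {V : Type*} [DecidableEq V] (G : SimpleGraph V) : ℕ :=
  sInf { m | ∃ w, AcqReach G (fun _ => 1) w ∧ AcqMaximal G w ∧
    m = {v | 0 < w v}.ncard }

/-! ### Auxiliary lemmas -/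

section Aux

variable {V : Type*} [DecidableEq V] [Fintype V] {G : SimpleGraph V}

/-- A single acquisition move preserves the total weight. -/
lemma AcqMove.sum_eq {w w' : V → ℕ} (h : AcqMove G w w') :
    ∑ x, w' x = ∑ x, w x := by
  obtain ⟨u, v, hadj, hu, huv, rfl⟩ := h
  have hne : u ≠ v := hadj.ne
  classical
  rw [Finset.sum_update_of_mem (Finset.mem_univ u),
      Finset.sum_update_of_mem (by simp [hne.symm] : v ∈ Finset.univ \ {u})]
  have h1 : ∑ x, w x = w u + ∑ x ∈ Finset.univ \ {u}, w x := by
    rw [Finset.sum_eq_sum_sdiff_singleton_add (Finset.mem_univ u)]; ring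
  have h2 : ∑ x ∈ Finset.univ \ {u}, w x
      = w v + ∑ x ∈ (Finset.univ \ {u}) \ {v}, w x := by
    rw [Finset.sum_eq_sum_sdiff_singleton_add (by simp [hne.symm] : v ∈ Finset.univ \ {u})]
    ring
  omega

/-- Total weight is preserved along acquisition sequences. -/
lemma AcqReach.sum_eq {w w' : V → ℕ} (h : AcqReach G w w') :
    ∑ x, w' x = ∑ x, w x := by
  induction h with
  | refl => rfl
  | tail _ h ih => rw [h.sum_eq, ih]

/-- Zero weights stay zero after a move. -/
lemma AcqMove.zero_of_zero {w w' : V → ℕ} (h : AcqMove G w w') {x : V}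
    (hx : w x = 0) : w' x = 0 := by
  obtain ⟨u, v, hadj, hu, huv, rfl⟩ := h
  have hxu : x ≠ u := by rintro rfl; omega
  have hxv : x ≠ v := by rintro rfl; omega
  simp [Function.update_apply, hxu, hxv, hx]

open Classical in
/-- Number of zero-weight neighbours of `v`. -/
noncomputable def zcount (G : SimpleGraph V) (w : V → ℕ) (v : V) : ℕ :=
  {y | G.Adj v y ∧ w y = 0}.ncard

lemma AcqMove.zcount_mono {w w' : V → ℕ} (h : AcqMove G w w') (x : V) :
    zcount G w x ≤ zcount G w' x := by
  apply Set.ncard_le_ncard _ (Set.toFinite _)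
  rintro y ⟨hy1, hy2⟩
  exact ⟨hy1, h.zero_of_zero hy2⟩

/-- The key invariant: each weight is at most `2 ^ (number of zero neighbours)`. -/
lemma AcqMove.invariant {w w' : V → ℕ} (h : AcqMove G w w')
    (hw : ∀ x, w x ≤ 2 ^ zcount G w x) (x : V) : w' x ≤ 2 ^ zcount G w' x := by
  obtain ⟨u, v, hadj, hu, huv, rfl⟩ := h
  have hne : u ≠ v := hadj.ne
  by_cases hxu : x = u
  · subst hxu; simp
  by_cases hxv : x = v
  · subst hxv
    have hsub : insert u {y | G.Adj x y ∧ w y = 0}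
        ⊆ {y | G.Adj x y ∧ (Function.update (Function.update w x (w x + w u)) u 0) y = 0} := by
      rintro y hy
      rcases hy with rfl | ⟨hy1, hy2⟩
      · exact ⟨hadj.symm, by simp⟩
      · refine ⟨hy1, ?_⟩
        have hyu : y ≠ u := by rintro rfl; omega
        have hyv : y ≠ x := by rintro rfl; omega
        simp [Function.update_apply, hyu, hyv, hy2]
    have hnotmem : u ∉ {y | G.Adj x y ∧ w y = 0} := by
      rintro ⟨-, h2⟩; omega
    have hcard : zcount G w x + 1 ≤
        zcount G (Function.update (Function.update w x (w x + w u)) u 0) x := by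
      calc zcount G w x + 1 = (insert u {y | G.Adj x y ∧ w y = 0}).ncard := by
            rw [Set.ncard_insert_of_notMem hnotmem (Set.toFinite _)]; rfl
        _ ≤ _ := Set.ncard_le_ncard hsub (Set.toFinite _)
    have hx : Function.update (Function.update w x (w x + w u)) u 0 x = w x + w u := by
      simp [Function.update_apply, hne, Ne.symm hne]
    rw [hx]
    calc w x + w u ≤ 2 * w x := by omega
      _ ≤ 2 * 2 ^ zcount G w x := by have := hw x; omega
      _ = 2 ^ (zcount G w x + 1) := by ring
      _ ≤ _ := Nat.pow_le_pow_right (by norm_num) hcard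
  · have hx : Function.update (Function.update w v (w v + w u)) u 0 x = w x := by
      simp [Function.update_apply, hxu, hxv]
    rw [hx]
    have hmv : AcqMove G w (Function.update (Function.update w v (w v + w u)) u 0) :=
      ⟨u, v, hadj, hu, huv, rfl⟩
    exact le_trans (hw x) (Nat.pow_le_pow_right (by norm_num) (hmv.zcount_mono x))

lemma AcqReach.invariant {w : V → ℕ}
    (h : AcqReach G (fun _ => 1) w) : ∀ x, w x ≤ 2 ^ zcount G w x := by
  induction h with
  | refl => intro x; simpa using Nat.one_le_two_pow
  | tail _ hstep ih => exact hstep.invariant ih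

end Aux

section Cycle

open SimpleGraph

variable {k : ℕ}

lemma fin_sub_val {n : ℕ} (u v : Fin n) : (u - v).val = (n - v.val + u.val) % n := by
  rw [Fin.sub_def]

lemma adj_of_val_succ {n : ℕ} (hn : 3 ≤ n) {u v : Fin n} (h : (v : ℕ) = (u : ℕ) + 1) :
    (cycleGraph n).Adj u v := by
  rw [SimpleGraph.cycleGraph_adj']
  right
  rw [fin_sub_val, h]
  have hu := u.is_lt
  have he : n - (u : ℕ) + ((u : ℕ) + 1) = n + 1 := by omega
  rw [he, Nat.add_mod_left, Nat.mod_eq_of_lt (by omega)]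

/-- On the cycle, every vertex has at most two zero neighbours. -/
lemma zcount_le_two' {n : ℕ} (hn : 2 ≤ n) (w : Fin n → ℕ) (v : Fin n) :
    zcount (cycleGraph n) w v ≤ 2 := by
  obtain ⟨m, rfl⟩ : ∃ m, n = m + 2 := ⟨n - 2, by omega⟩
  have hsub : {y | (cycleGraph (m + 2)).Adj v y ∧ w y = 0} ⊆ {v - 1, v + 1} := by
    intro y hy
    have : y ∈ (cycleGraph (m + 2)).neighborSet v := hy.1
    rwa [cycleGraph_neighborSet] at this
  calc zcount (cycleGraph (m + 2)) w v ≤ ({v - 1, v + 1} : Set (Fin (m + 2))).ncard :=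
        Set.ncard_le_ncard hsub (Set.toFinite _)
    _ ≤ 2 := by
        apply le_trans (Set.ncard_insert_le _ _)
        simp

lemma zcount_le_two (hk : 0 < k) (w : Fin (4 * k) → ℕ) (v : Fin (4 * k)) :
    zcount (cycleGraph (4 * k)) w v ≤ 2 :=
  zcount_le_two' (by omega) w v

/-- Weight bound on the cycle. -/
lemma weight_le_four (hk : 0 < k) {w : Fin (4 * k) → ℕ}
    (h : AcqReach (cycleGraph (4 * k)) (fun _ => 1) w) (x : Fin (4 * k)) : w x ≤ 4 := by
  calc w x ≤ 2 ^ zcount (cycleGraph (4 * k)) w x := h.invariant x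
    _ ≤ 2 ^ 2 := Nat.pow_le_pow_right (by norm_num) (zcount_le_two hk w x)
    _ = 4 := by norm_num

/-- The block-wise weight function: blocks `[4j, 4j+4)` already gathered. -/
def blockW (n j : ℕ) : Fin n → ℕ :=
  fun v => if (v : ℕ) < 4 * j then (if (v : ℕ) % 4 = 2 then 4 else 0) else 1

lemma blockW_step (hk : 0 < k) (j : ℕ) (hj : j < k) :
    AcqReach (cycleGraph (4 * k)) (blockW (4 * k) j) (blockW (4 * k) (j + 1)) := by
  have h3 : 3 ≤ 4 * k := by omega
  obtain ⟨a, ha⟩ : ∃ a : Fin (4 * k), (a : ℕ) = 4 * j := ⟨⟨4 * j, by omega⟩, rfl⟩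
  obtain ⟨b, hb⟩ : ∃ b : Fin (4 * k), (b : ℕ) = 4 * j + 1 := ⟨⟨4 * j + 1, by omega⟩, rfl⟩
  obtain ⟨c, hc⟩ : ∃ c : Fin (4 * k), (c : ℕ) = 4 * j + 2 := ⟨⟨4 * j + 2, by omega⟩, rfl⟩
  obtain ⟨d, hd⟩ : ∃ d : Fin (4 * k), (d : ℕ) = 4 * j + 3 := ⟨⟨4 * j + 3, by omega⟩, rfl⟩
  have hab : (cycleGraph (4 * k)).Adj a b := adj_of_val_succ h3 (by omega)
  have hbc : (cycleGraph (4 * k)).Adj b c := adj_of_val_succ h3 (by omega)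
  have hdc : (cycleGraph (4 * k)).Adj d c := (adj_of_val_succ h3 (by omega)).symm
  have hne_ab : a ≠ b := fun h => absurd (congrArg Fin.val h) (by omega)
  have hne_ac : a ≠ c := fun h => absurd (congrArg Fin.val h) (by omega)
  have hne_ad : a ≠ d := fun h => absurd (congrArg Fin.val h) (by omega)
  have hne_bc : b ≠ c := fun h => absurd (congrArg Fin.val h) (by omega)
  have hne_bd : b ≠ d := fun h => absurd (congrArg Fin.val h) (by omega)
  have hne_cd : c ≠ d := fun h => absurd (congrArg Fin.val h) (by omega)
  set w0 : Fin (4 * k) → ℕ := blockW (4 * k) j with hw0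
  have h0a : w0 a = 1 := by simp only [hw0, blockW, ha]; rw [if_neg (by omega)]
  have h0b : w0 b = 1 := by simp only [hw0, blockW, hb]; rw [if_neg (by omega)]
  have h0c : w0 c = 1 := by simp only [hw0, blockW, hc]; rw [if_neg (by omega)]
  have h0d : w0 d = 1 := by simp only [hw0, blockW, hd]; rw [if_neg (by omega)]
  set w1 : Fin (4 * k) → ℕ :=
    Function.update (Function.update w0 c (w0 c + w0 d)) d 0 with hw1
  have h1a : w1 a = 1 := by
    rw [hw1, Function.update_of_ne hne_ad, Function.update_of_ne hne_ac, h0a]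
  have h1b : w1 b = 1 := by
    rw [hw1, Function.update_of_ne hne_bd, Function.update_of_ne hne_bc, h0b]
  set w2 : Fin (4 * k) → ℕ :=
    Function.update (Function.update w1 b (w1 b + w1 a)) a 0 with hw2
  have h2b : w2 b = 2 := by
    rw [hw2, Function.update_of_ne hne_ab.symm, Function.update_self, h1a, h1b]
  have h2c : w2 c = 2 := by
    rw [hw2, Function.update_of_ne hne_ac.symm, Function.update_of_ne hne_bc.symm, hw1,
      Function.update_of_ne hne_cd, Function.update_self, h0c, h0d]
  refine Relation.ReflTransGen.head ⟨d, c, hdc, by omega, by omega, hw1⟩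
    (Relation.ReflTransGen.head ⟨a, b, hab, by omega, by omega, hw2⟩
      (Relation.ReflTransGen.single ⟨b, c, hbc, by omega, by omega, ?_⟩))
  rw [show w2 c + w2 b = 4 by omega]
  funext x
  by_cases hxb : x = b
  · subst hxb
    rw [Function.update_self]
    simp only [blockW, hb]
    rw [if_pos (by omega), if_neg (by omega)]
  by_cases hxc : x = c
  · subst hxc
    rw [Function.update_of_ne hne_bc.symm, Function.update_self]
    simp only [blockW, hc]
    rw [if_pos (by omega), if_pos (by omega)]
  by_cases hxa : x = a
  · subst hxa
    rw [Function.update_of_ne hne_ab, Function.update_of_ne hne_ac, hw2,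
      Function.update_self]
    simp only [blockW, ha]
    rw [if_pos (by omega), if_neg (by omega)]
  by_cases hxd : x = d
  · subst hxd
    rw [Function.update_of_ne hne_bd.symm, Function.update_of_ne hne_cd.symm, hw2,
      Function.update_of_ne hne_ad.symm, Function.update_of_ne hne_bd.symm, hw1,
      Function.update_self]
    simp only [blockW, hd]
    rw [if_pos (by omega), if_neg (by omega)]
  · have hxa' : (x : ℕ) ≠ 4 * j := by rw [Fin.ext_iff] at hxa; omega
    have hxb' : (x : ℕ) ≠ 4 * j + 1 := by rw [Fin.ext_iff] at hxb; omega
    have hxc' : (x : ℕ) ≠ 4 * j + 2 := by rw [Fin.ext_iff] at hxc; omega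
    have hxd' : (x : ℕ) ≠ 4 * j + 3 := by rw [Fin.ext_iff] at hxd; omega
    rw [Function.update_of_ne hxb, Function.update_of_ne hxc, hw2,
      Function.update_of_ne hxa, Function.update_of_ne hxb, hw1,
      Function.update_of_ne hxd, Function.update_of_ne hxc, hw0]
    simp only [blockW]
    split_ifs <;> omega

lemma blockW_reach (hk : 0 < k) (j : ℕ) (hj : j ≤ k) :
    AcqReach (cycleGraph (4 * k)) (fun _ => 1) (blockW (4 * k) j) := by
  induction j with
  | zero =>
      have h : blockW (4 * k) 0 = fun _ => 1 := by
        funext v; simp [blockW]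
      rw [h]
      exact Relation.ReflTransGen.refl
  | succ j ih =>
      exact Relation.ReflTransGen.trans (ih (by omega)) (blockW_step hk j (by omega))

lemma mod_four_two_not_adj (hk : 0 < k) {u v : Fin (4 * k)}
    (hu : (u : ℕ) % 4 = 2) (hv : (v : ℕ) % 4 = 2) :
    ¬ (cycleGraph (4 * k)).Adj u v := by
  intro h
  rw [SimpleGraph.cycleGraph_adj'] at h
  have hu' := u.is_lt
  have hv' := v.is_lt
  have key : ∀ x y : Fin (4 * k), (x : ℕ) % 4 = 2 → (y : ℕ) % 4 = 2 →
      (x - y).val ≠ 1 := by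
    intro x y hx hy hxy
    rw [fin_sub_val] at hxy
    have hx' := x.is_lt
    have hy' := y.is_lt
    set t := 4 * k - (y : ℕ) + (x : ℕ) with ht
    rcases Nat.lt_or_ge t (4 * k) with h' | h'
    · rw [Nat.mod_eq_of_lt h'] at hxy; omega
    · rw [Nat.mod_eq_sub_mod h', Nat.mod_eq_of_lt (by omega)] at hxy; omega
  rcases h with h | h
  · exact key u v hu hv h
  · exact key v u hv hu h

lemma blockW_pos_iff (hk : 0 < k) (v : Fin (4 * k)) :
    0 < blockW (4 * k) k v ↔ (v : ℕ) % 4 = 2 := by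
  have := v.is_lt
  by_cases h : (v : ℕ) % 4 = 2 <;> simp [blockW, this, h]

lemma blockW_maximal (hk : 0 < k) : AcqMaximal (cycleGraph (4 * k)) (blockW (4 * k) k) := by
  rintro w' ⟨u, v, hadj, hu, huv, -⟩
  have hu2 : (u : ℕ) % 4 = 2 := (blockW_pos_iff hk u).mp hu
  have hu4 : blockW (4 * k) k u = 4 := by simp [blockW, u.is_lt, hu2]
  have hv2 : (v : ℕ) % 4 = 2 := by
    by_contra h
    have : blockW (4 * k) k v = 0 := by simp [blockW, v.is_lt, h]
    omega
  exact mod_four_two_not_adj hk hu2 hv2 hadj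

lemma blockW_card (hk : 0 < k) : {v : Fin (4 * k) | 0 < blockW (4 * k) k v}.ncard = k := by
  classical
  have hset : {v : Fin (4 * k) | 0 < blockW (4 * k) k v}
      = ↑(Finset.univ.filter (fun v : Fin (4 * k) => (v : ℕ) % 4 = 2)) := by
    ext v
    simp [blockW_pos_iff hk v]
  rw [hset, Set.ncard_coe_finset]
  have : (Finset.univ.filter (fun v : Fin (4 * k) => (v : ℕ) % 4 = 2)).card
      = (Finset.univ : Finset (Fin k)).card := by
    apply Finset.card_nbij' (i := fun v : Fin (4 * k) => (⟨(v : ℕ) / 4, by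
        have := v.is_lt; omega⟩ : Fin k))
      (j := fun i : Fin k => (⟨4 * (i : ℕ) + 2, by have := i.is_lt; omega⟩ : Fin (4 * k)))
    · intro v hv
      exact Finset.mem_univ _
    · intro i hi
      simp only [Finset.coe_filter, Set.mem_setOf_eq, Finset.mem_coe, Finset.mem_filter, Finset.mem_univ, true_and]
      omega
    · intro v hv
      simp only [Finset.coe_filter, Set.mem_setOf_eq, Finset.mem_coe, Finset.mem_filter, Finset.mem_univ, true_and] at hv
      apply Fin.ext
      simp only []
      omega
    · intro i hi
      apply Fin.ext
      simp only []
      omega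
  rw [this]
  simp

end Cycle

/-- The total acquisition number of the cycle `C_{4k}` equals `k` for every
positive integer `k`. -/
theorem totalAcq_cycleGraph (k : ℕ) (hk : 0 < k) :
    totalAcq (SimpleGraph.cycleGraph (4 * k)) = k := by
  have hkmem : k ∈ { m | ∃ w, AcqReach (SimpleGraph.cycleGraph (4 * k)) (fun _ => 1) w ∧
      AcqMaximal (SimpleGraph.cycleGraph (4 * k)) w ∧ m = {v | 0 < w v}.ncard } :=
    ⟨blockW (4 * k) k, blockW_reach hk k le_rfl, blockW_maximal hk, (blockW_card hk).symm⟩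
  refine le_antisymm (Nat.sInf_le hkmem) (le_csInf ⟨k, hkmem⟩ ?_)
  rintro m ⟨w, hreach, -, rfl⟩
  -- lower bound
  classical
  have hsum : ∑ x, w x = 4 * k := by
    rw [hreach.sum_eq]; simp
  have hle : ∀ x, w x ≤ 4 := weight_le_four hk hreach
  set F : Finset (Fin (4 * k)) := Finset.univ.filter (fun v => 0 < w v) with hF
  have hset : {v : Fin (4 * k) | 0 < w v} = ↑F := by simp [hF]
  rw [hset, Set.ncard_coe_finset]
  have : ∑ x, w x ≤ 4 * F.card := by
    calc ∑ x, w x = ∑ x ∈ F, w x := by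
          refine (Finset.sum_subset (Finset.subset_univ F) ?_).symm
          intro x _ hx
          simp only [hF, Finset.mem_filter, Finset.mem_univ, true_and, not_lt] at hx
          omega
      _ ≤ ∑ _x ∈ F, 4 := Finset.sum_le_sum (fun x _ => hle x)
      _ = 4 * F.card := by rw [Finset.sum_const]; ring
  omega
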